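/- Let N be an abelian group, H a monoid, (E,φ) a compatible pair, and g : H × H → N a factor set relative to (E,φ). Then the set ⨆_{h∈H} N/∼^h with unit ([g(1,1)^{-1}],1)-adjusted appropriately (equivalently, with unit ([1],1) after normalizing g) and multiplication ([n],h)·([n'],h') = ([n·φ(h,n')·g(h,h')], h·h') is a monoid. -/
import Mathlib


/-- An admissible H-indexed equivalence relation E on N: for each h an equivalence
relation ∼^h on N such that ∼^1 is equality, left multiplication preserves ∼^h, and
n ∼^h n' implies n ∼^{h·y} n'. -/
structure IndexedEqv (H N : Type*) [Monoid H] [Monoid N] where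
  r : H → N → N → Prop
  iseqv : ∀ h, Equivalence (r h)
  one_eq : ∀ {n n' : N}, r 1 n n' → n = n'
  mul_left : ∀ (x : N) {h : H} {n n' : N}, r h n n' → r h (x * n) (x * n')
  mul_right : ∀ (y : H) {h : H} {n n' : N}, r h n n' → r (h * y) n n'

def IndexedEqv.setoid {H N : Type*} [Monoid H] [Monoid N] (E : IndexedEqv H N) (h : H) :
    Setoid N := ⟨E.r h, E.iseqv h⟩

/-- α : H × N → N is a compatible action for the admissible indexed equivalence relation E. -/
structure CompatibleAction {H N : Type*} [Monoid H] [Monoid N] (E : IndexedEqv H N)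
    (α : H → N → N) : Prop where
  c1 : ∀ (h : H) (n n' x : N), E.r h n n' → E.r h (n * α h x) (n' * α h x)
  c2 : ∀ (h : H) (n n' : N) (x : H), E.r h n n' → E.r (x * h) (α x n) (α x n')
  c3 : ∀ (h : H) (n n' : N), E.r h (α h (n * n')) (α h n * α h n')
  c4 : ∀ (h h' : H) (n : N), E.r (h * h') (α (h * h') n) (α h (α h' n))
  c5 : ∀ h : H, E.r h (α h 1) 1
  c6 : ∀ n : N, E.r 1 (α 1 n) n

/-- The carrier ⨆_{h ∈ H} N/∼^h of the weak semidirect product. -/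
def WProd {H N : Type*} [Monoid H] [Monoid N] (E : IndexedEqv H N) : Type _ :=
  (h : H) × Quotient (E.setoid h)

/-- The element ([n], h). -/
def wmk {H N : Type*} [Monoid H] [Monoid N] (E : IndexedEqv H N) (h : H) (n : N) : WProd E :=
  ⟨h, Quotient.mk (E.setoid h) n⟩

/-- The multiplication ([n],h)·([n'],h') = ([n·α(h,n')], h·h') of the weak semidirect
product N ⋊_{E,α} H. -/
def wmul {H N : Type*} [Monoid H] [Monoid N] (E : IndexedEqv H N) {α : H → N → N}
    (hα : CompatibleAction E α) : WProd E → WProd E → WProd E :=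
  fun x y =>
    ⟨x.1 * y.1,
      Quotient.liftOn₂ x.2 y.2
        (fun n n' => Quotient.mk (E.setoid (x.1 * y.1)) (n * α x.1 n'))
        (fun a c b d hab hcd =>
          Quotient.sound
            ((E.iseqv (x.1 * y.1)).trans
              (E.mul_right y.1 (hα.c1 x.1 a b c hab))
              (E.mul_left b (hα.c2 y.1 c d x.1 hcd))))⟩

/-- A factor set relative to the compatible pair (E, α), with abelian group kernel N:
g(h,1) ∼^h 1 ∼^h g(1,h) and g(x,y)·g(xy,z) ∼^{xyz} α(x, g(y,z))·g(x, yz). -/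
def IsFactorSet {H N : Type*} [Monoid H] [CommGroup N] (E : IndexedEqv H N)
    (α : H → N → N) (g : H → H → N) : Prop :=
  (∀ h : H, E.r h (g h 1) 1) ∧ (∀ h : H, E.r h (g 1 h) 1) ∧
  ∀ x y z : H, E.r (x * y * z) (g x y * g (x * y) z) (α x (g y z) * g x (y * z))

/-- The multiplication ([n],h)·([n'],h') = ([n·α(h,n')·g(h,h')], h·h') of
N ⋊_{E,α}^g H. -/
def wgmul {H N : Type*} [Monoid H] [CommGroup N] (E : IndexedEqv H N) {α : H → N → N}
    (g : H → H → N) (hα : CompatibleAction E α) : WProd E → WProd E → WProd E :=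
  fun x y =>
    ⟨x.1 * y.1,
      Quotient.liftOn₂ x.2 y.2
        (fun n n' => Quotient.mk (E.setoid (x.1 * y.1)) (n * α x.1 n' * g x.1 y.1))
        (by
          intro a c b d hab hcd
          apply Quotient.sound
          have h1 : E.r (x.1 * y.1) (a * α x.1 c) (b * α x.1 d) :=
            (E.iseqv _).trans (E.mul_right y.1 (hα.c1 x.1 a b c hab))
              (E.mul_left b (hα.c2 y.1 c d x.1 hcd))
          have h2 := E.mul_left (g x.1 y.1) h1
          show E.r (x.1 * y.1) (a * α x.1 c * g x.1 y.1) (b * α x.1 d * g x.1 y.1)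
          simpa [mul_comm, mul_assoc, mul_left_comm] using h2)⟩

section Aux

variable {H N : Type*} [Monoid H] [CommGroup N] (E : IndexedEqv H N)

lemma IndexedEqv.rmul_right {h : H} {a b : N} (x : N) (hr : E.r h a b) :
    E.r h (a * x) (b * x) := by
  simpa [mul_comm] using E.mul_left x hr

lemma IndexedEqv.rcongr {h : H} {a b c d : N} (h1 : E.r h a b) (h2 : E.r h c d) :
    E.r h (a * c) (b * d) :=
  (E.iseqv h).trans (E.rmul_right c h1) (E.mul_left b h2)

lemma wmk_eq_of_r {h : H} {n n' : N} (hr : E.r h n n') : wmk E h n = wmk E h n' := by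
  show (⟨h, Quotient.mk (E.setoid h) n⟩ : WProd E) = ⟨h, Quotient.mk (E.setoid h) n'⟩
  exact congrArg (Sigma.mk h) (Quotient.sound hr)

lemma wgmul_mk {α : H → N → N} (g : H → H → N) (hα : CompatibleAction E α)
    (h h' : H) (n n' : N) :
    wgmul E g hα (wmk E h n) (wmk E h' n') = wmk E (h * h') (n * α h n' * g h h') := rfl

end Aux

/-- Let N be an abelian group, H a monoid, (E,α) a compatible pair and g a
factor set relative to (E,α). Then ⨆_{h∈H} N/∼^h with unit ([1],1) and multiplication
([n],h)·([n'],h') = ([n·α(h,n')·g(h,h')], h·h') is a monoid. -/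
theorem wgprod_monoid {H N : Type*} [Monoid H] [CommGroup N] (E : IndexedEqv H N)
    (α : H → N → N) (hα : CompatibleAction E α) (g : H → H → N)
    (hg : IsFactorSet E α g) :
    ∃ M : Monoid (WProd E),
      M.one = wmk E 1 1 ∧
      ∀ (h h' : H) (n n' : N),
        M.mul (wmk E h n) (wmk E h' n') = wmk E (h * h') (n * α h n' * g h h') := by
  obtain ⟨hg1, hg2, hg3⟩ := hg
  refine ⟨{ mul := wgmul E g hα, one := wmk E 1 1,
            one_mul := ?om, mul_one := ?mo, mul_assoc := ?ma }, rfl, fun h h' n n' => rfl⟩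
  case om =>
    rintro ⟨h, q⟩
    induction q using Quotient.inductionOn with
    | h n =>
      show wgmul E g hα (wmk E 1 1) (wmk E h n) = wmk E h n
      rw [wgmul_mk, one_mul]
      apply wmk_eq_of_r
      have h1 : E.r h (α 1 n) n := by simpa using E.mul_right h (hα.c6 n)
      have h2 : E.r h (g 1 h) 1 := hg2 h
      simpa using E.rcongr h1 h2
  case mo =>
    rintro ⟨h, q⟩
    induction q using Quotient.inductionOn with
    | h n =>
      show wgmul E g hα (wmk E h n) (wmk E 1 1) = wmk E h n
      rw [wgmul_mk, mul_one]
      apply wmk_eq_of_r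
      have h1 : E.r h (α h 1) 1 := hα.c5 h
      have h2 : E.r h (g h 1) 1 := hg1 h
      simpa [mul_assoc] using E.mul_left n (E.rcongr h1 h2)
  case ma =>
    rintro ⟨h, q⟩ ⟨h', q'⟩ ⟨h'', q''⟩
    induction q using Quotient.inductionOn with
    | h n =>
    induction q' using Quotient.inductionOn with
    | h n' =>
    induction q'' using Quotient.inductionOn with
    | h n'' =>
      show wgmul E g hα (wgmul E g hα (wmk E h n) (wmk E h' n')) (wmk E h'' n'')
          = wgmul E g hα (wmk E h n) (wgmul E g hα (wmk E h' n') (wmk E h'' n''))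
      rw [wgmul_mk, wgmul_mk, wgmul_mk, wgmul_mk, mul_assoc h h' h'']
      apply wmk_eq_of_r
      -- expand α h of the product
      have e3 : E.r h (α h (n' * α h' n'' * g h' h''))
          (α h n' * α h (α h' n'') * α h (g h' h'')) :=
        (E.iseqv h).trans (hα.c3 h (n' * α h' n'') (g h' h''))
          (E.rmul_right _ (hα.c3 h n' (α h' n'')))
      have e3' : E.r (h * (h' * h'')) (α h (n' * α h' n'' * g h' h''))
          (α h n' * α h (α h' n'') * α h (g h' h'')) := E.mul_right _ e3
      have e4 : E.r (h * (h' * h'')) (α h (α h' n'')) (α (h * h') n'') := by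
        have := (E.iseqv _).symm (hα.c4 h h' n'')
        simpa [mul_assoc] using E.mul_right h'' this
      have e5 : E.r (h * (h' * h'')) (α h (g h' h'') * g h (h' * h''))
          (g h h' * g (h * h') h'') := by
        have := (E.iseqv _).symm (hg3 h h' h'')
        simpa [mul_assoc] using this
      -- combine
      have key : E.r (h * (h' * h''))
          (n * α h (n' * α h' n'' * g h' h'') * g h (h' * h''))
          (n * (α h n' * α (h * h') n'') * (g h h' * g (h * h') h'')) := by
        have step1 : E.r (h * (h' * h''))
            (n * α h (n' * α h' n'' * g h' h'') * g h (h' * h''))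
            (n * (α h n' * α h (α h' n'') * α h (g h' h'')) * g h (h' * h'')) :=
          E.rmul_right _ (E.mul_left n e3')
        have step2 : E.r (h * (h' * h''))
            (n * (α h n' * α h (α h' n'') * α h (g h' h'')) * g h (h' * h''))
            (n * (α h n' * α (h * h') n'' * α h (g h' h'')) * g h (h' * h'')) :=
          E.rmul_right _ (E.mul_left n (E.rmul_right _ (E.mul_left _ e4)))
        have step3 : E.r (h * (h' * h''))
            (n * (α h n' * α (h * h') n'') * (α h (g h' h'') * g h (h' * h'')))
            (n * (α h n' * α (h * h') n'') * (g h h' * g (h * h') h'')) :=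
          E.mul_left _ e5
        refine (E.iseqv _).trans ((E.iseqv _).trans step1 step2) ?_
        simpa [mul_assoc, mul_comm, mul_left_comm] using step3
      have goal' : E.r (h * (h' * h''))
          (n * α h n' * g h h' * α (h * h') n'' * g (h * h') h'')
          (n * α h (n' * α h' n'' * g h' h'') * g h (h' * h'')) := by
        refine (E.iseqv _).symm ?_
        simpa [mul_assoc, mul_comm, mul_left_comm] using key
      exact goal'
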